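/- Any graph G on v(G) ≥ 3 vertices with minimum degree δ(G) ≥ v(G)/2 contains a Hamilton cycle. -/

import Mathlib

namespace DiracAux

variable {V : Type*} (G : SimpleGraph V)

/-- Turn a list which forms an adjacency chain into a walk. -/
def toWalk : (l : List V) → (a b : V) → List.Chain G.Adj a (l ++ [b]) → G.Walk a b
  | [], a, b, h => SimpleGraph.Walk.cons (List.chain_cons.mp h).1 SimpleGraph.Walk.nil
  | x :: l, a, b, h =>
      SimpleGraph.Walk.cons (List.chain_cons.mp h).1 (toWalk l x b (List.chain_cons.mp h).2)

@[simp] lemma support_toWalk : ∀ (l : List V) (a b : V) (h),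
    (toWalk G l a b h).support = a :: (l ++ [b])
  | [], a, b, h => by simp [toWalk]
  | x :: l, a, b, h => by simp [toWalk]; exact support_toWalk l x b _

lemma edge_end_toWalk : ∀ (l : List V) (a b : V) (h), b ∉ a :: l →
    ∀ y, s(b, y) ∈ (toWalk G l a b h).edges → y = (a :: l).getLast (List.cons_ne_nil _ _)
  | [], a, b, h, hb, y, hy => by
    simp only [toWalk, SimpleGraph.Walk.edges_cons, SimpleGraph.Walk.edges_nil,
      List.mem_singleton, Sym2.eq_iff] at hy
    simp only [List.mem_singleton] at hb
    rcases hy with ⟨h1, h2⟩ | ⟨h1, h2⟩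
    · exact absurd h1 hb
    · simpa using h2
  | x :: l, a, b, h, hb, y, hy => by
    simp only [toWalk, SimpleGraph.Walk.edges_cons, List.mem_cons, Sym2.eq_iff] at hy
    simp only [List.mem_cons, not_or] at hb
    rcases hy with (⟨h1, h2⟩ | ⟨h1, h2⟩) | hy
    · exact absurd h1 hb.1
    · exact absurd h1 hb.2.1
    · have := edge_end_toWalk l x b _ (by simpa using ⟨hb.2.1, hb.2.2⟩) y hy
      rw [this]
      exact (List.getLast_cons (List.cons_ne_nil _ _)).symm

end DiracAux

open List

/-- Dirac's theorem: any graph on at least 3 vertices with minimum degree at least `v(G)/2`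
contains a Hamilton cycle. -/
theorem stmt11 {V : Type*} [Fintype V] [DecidableEq V] (G : SimpleGraph V) [DecidableRel G.Adj]
    (h3 : 3 ≤ Fintype.card V) (hδ : (Fintype.card V : ℝ) / 2 ≤ (G.minDegree : ℝ)) :
    G.IsHamiltonian := by
  classical
  intro _
  set n := Fintype.card V with hn
  have hδ' : n ≤ 2 * G.minDegree := by
    have : (n : ℝ) ≤ 2 * G.minDegree := by linarith
    exact_mod_cast this
  have hdeg : ∀ v, n ≤ 2 * G.degree v := fun v => by
    have := G.minDegree_le_degree v; omega
  -- common neighbor lemma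
  have hcn : ∀ u w : V, u ≠ w → ¬ G.Adj u w → ∃ x, G.Adj u x ∧ G.Adj w x := by
    intro u w hne hnadj
    by_contra hc; push_neg at hc
    have hdisj : Disjoint (G.neighborFinset u) (G.neighborFinset w) := by
      rw [Finset.disjoint_left]
      intro x hx hx'
      exact hc x (by simpa using hx) (by simpa using hx')
    have h1 : (G.neighborFinset u ∪ G.neighborFinset w).card = G.degree u + G.degree w := by
      rw [Finset.card_union_of_disjoint hdisj, SimpleGraph.card_neighborFinset_eq_degree,
        SimpleGraph.card_neighborFinset_eq_degree]
    have h2 : (G.neighborFinset u ∪ G.neighborFinset w) ⊆ Finset.univ.erase u := by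
      intro x hx
      simp only [Finset.mem_union, SimpleGraph.mem_neighborFinset] at hx
      refine Finset.mem_erase.mpr ⟨?_, Finset.mem_univ x⟩
      rintro rfl
      rcases hx with hx | hx
      · exact G.irrefl hx
      · exact hnadj (hx.symm)
    have h3' : (G.neighborFinset u ∪ G.neighborFinset w).card ≤ n - 1 := by
      have := Finset.card_le_card h2
      rwa [Finset.card_erase_of_mem (Finset.mem_univ u), Finset.card_univ] at this
    have := hdeg u; have := hdeg w
    omega
  -- maximal path
  have hne : Nonempty V := Fintype.card_pos_iff.mp (by omega)
  obtain ⟨v0⟩ := hne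
  set S : Set ℕ := {k | ∃ l : List V, l ≠ [] ∧ l.IsChain G.Adj ∧ l.Nodup ∧ l.length = k} with hS
  have hSne : S.Nonempty := ⟨1, [v0], by simp⟩
  have hSbdd : BddAbove S := by
    refine ⟨n, fun k hk => ?_⟩
    obtain ⟨l, -, -, hnd, rfl⟩ := hk
    exact hnd.length_le_card
  obtain ⟨l, hl0, hlc, hlnd, hlen⟩ := Nat.sSup_mem hSne hSbdd
  have hmax : ∀ l' : List V, l' ≠ [] → l'.IsChain G.Adj → l'.Nodup → l'.length ≤ l.length := by
    intro l' h1 h2 h3'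
    rw [hlen]
    exact le_csSup hSbdd ⟨l', h1, h2, h3', rfl⟩
  set a := l.head hl0 with ha
  set b := l.getLast hl0 with hb
  -- all neighbors of the endpoints lie on l
  have hha : ∀ x, G.Adj a x → x ∈ l := by
    intro x hx
    by_contra hxl
    have hch : (x :: l).IsChain G.Adj := by
      rw [List.isChain_cons]
      refine ⟨?_, hlc⟩
      intro y hy
      rw [List.head?_eq_head hl0] at hy
      simp only [Option.mem_some_iff] at hy
      subst hy
      exact hx.symm
    have := hmax (x :: l) (List.cons_ne_nil _ _) hch (by simp [hlnd, hxl])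
    simp at this
  have hhb : ∀ x, G.Adj b x → x ∈ l := by
    intro x hx
    by_contra hxl
    have hrc : l.reverse.IsChain G.Adj := by
      rw [List.isChain_reverse]
      exact hlc.imp fun _ _ h => h.symm
    have hch : (x :: l.reverse).IsChain G.Adj := by
      rw [List.isChain_cons]
      refine ⟨?_, hrc⟩
      intro y hy
      rw [List.head?_eq_head (by simpa using hl0), List.head_reverse] at hy
      simp only [Option.mem_some_iff] at hy
      subst hy
      exact hx.symm
    have := hmax (x :: l.reverse) (List.cons_ne_nil _ _) hch
      (by simp [hlnd, hxl])
    simp at this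
  -- indexing
  have hlpos : 0 < l.length := List.length_pos_iff.mpr hl0
  obtain ⟨k, hkl⟩ : ∃ k, k + 1 = l.length := ⟨l.length - 1, by omega⟩
  have hd0 : l.getD 0 v0 = a := by
    rw [List.getD_eq_getElem _ _ hlpos, ha, List.head_eq_getElem_zero]
  have hdk : l.getD k v0 = b := by
    rw [List.getD_eq_getElem _ _ (by omega), hb, List.getLast_eq_getElem]
    congr 1
    omega
  set I : Finset ℕ := (Finset.range k).filter (fun i => G.Adj a (l.getD (i+1) v0)) with hI
  set J : Finset ℕ := (Finset.range k).filter (fun i => G.Adj b (l.getD i v0)) with hJ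
  have hinj : ∀ i j, i < l.length → j < l.length → l.getD i v0 = l.getD j v0 → i = j := by
    intro i j hi hj hij
    rw [List.getD_eq_getElem _ _ hi, List.getD_eq_getElem _ _ hj] at hij
    exact (hlnd.getElem_inj_iff).mp hij
  have hIcard : I.card = G.degree a := by
    rw [← SimpleGraph.card_neighborFinset_eq_degree]
    apply Finset.card_nbij (fun i => l.getD (i+1) v0)
    · intro i hi
      simp only [hI, Finset.mem_coe, Finset.mem_filter, Finset.mem_range] at hi
      simpa using hi.2
    · intro i hi j hj hij
      simp only [hI, Finset.coe_filter, Set.mem_setOf_eq, Finset.mem_range] at hi hj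
      have := hinj (i+1) (j+1) (by omega) (by omega) hij
      omega
    · intro x hx
      simp only [Finset.coe_filter, Finset.mem_coe, SimpleGraph.mem_neighborFinset] at hx
      have hxl : x ∈ l := hha x hx
      obtain ⟨j, hj, hjx⟩ := List.mem_iff_getElem.mp hxl
      have hj0 : j ≠ 0 := by
        rintro rfl
        rw [← List.head_eq_getElem_zero hl0] at hjx
        exact G.irrefl (hjx ▸ hx)
      refine ⟨j - 1, ?_, ?_⟩
      · simp only [hI, Finset.coe_filter, Set.mem_setOf_eq, Finset.mem_range]
        constructor
        · omega
        · rw [show j - 1 + 1 = j by omega, List.getD_eq_getElem _ _ hj, hjx]; exact hx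
      · show l.getD (j - 1 + 1) v0 = x
        rw [show j - 1 + 1 = j by omega, List.getD_eq_getElem _ _ hj, hjx]
  have hJcard : J.card = G.degree b := by
    rw [← SimpleGraph.card_neighborFinset_eq_degree]
    apply Finset.card_nbij (fun i => l.getD i v0)
    · intro i hi
      simp only [hJ, Finset.mem_coe, Finset.mem_filter, Finset.mem_range] at hi
      simpa using hi.2
    · intro i hi j hj hij
      simp only [hJ, Finset.coe_filter, Set.mem_setOf_eq, Finset.mem_range] at hi hj
      exact hinj i j (by omega) (by omega) hij
    · intro x hx
      simp only [Finset.coe_filter, Finset.mem_coe, SimpleGraph.mem_neighborFinset] at hx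
      have hxl : x ∈ l := hhb x hx
      obtain ⟨j, hj, hjx⟩ := List.mem_iff_getElem.mp hxl
      have hjk : j ≠ k := by
        rintro rfl
        rw [← List.getD_eq_getElem _ v0 hj, hdk] at hjx
        exact G.irrefl (hjx ▸ hx)
      refine ⟨j, ?_, ?_⟩
      · simp only [hJ, Finset.coe_filter, Set.mem_setOf_eq, Finset.mem_range]
        exact ⟨by omega, by rw [List.getD_eq_getElem _ _ hj, hjx]; exact hx⟩
      · show l.getD j v0 = x
        rw [List.getD_eq_getElem _ _ hj, hjx]
  -- pigeonhole
  have hIJ : (I ∩ J).Nonempty := by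
    rw [Finset.nonempty_iff_ne_empty]
    intro hemp
    have h1 : I.card + J.card = (I ∪ J).card := by
      have := Finset.card_union_add_card_inter I J
      rw [hemp] at this
      simpa using this.symm
    have h2 : (I ∪ J).card ≤ k := by
      have : I ∪ J ⊆ Finset.range k := by
        apply Finset.union_subset <;> exact Finset.filter_subset _ _
      simpa using Finset.card_le_card this
    have h4 : l.length ≤ n := hlnd.length_le_card
    have := hdeg a; have := hdeg b
    omega
  obtain ⟨i, hi⟩ := hIJ
  simp only [hI, hJ, Finset.mem_inter, Finset.mem_filter, Finset.mem_range] at hi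
  obtain ⟨⟨hik, hia⟩, -, hib⟩ := hi
  -- the cycle list
  set c : List V := l.take (i+1) ++ (l.drop (i+1)).reverse with hc
  have hi1 : i + 1 < l.length := by omega
  have htne : l.take (i+1) ≠ [] := by
    simp only [ne_eq, List.take_eq_nil_iff, not_or]
    exact ⟨by omega, hl0⟩
  have hdne : l.drop (i+1) ≠ [] := by
    simp only [ne_eq, List.drop_eq_nil_iff]
    omega
  have hcne : c ≠ [] := by
    simp only [hc, ne_eq, List.append_eq_nil_iff, not_and]
    intro h; exact absurd h htne
  have hcperm : c.Perm l := by
    calc c ~ l.take (i+1) ++ l.drop (i+1) := (List.reverse_perm _).append_left _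
    _ = l := List.take_append_drop _ _
  have hcnd : c.Nodup := hcperm.nodup_iff.mpr hlnd
  have hchead : c.head hcne = a := by
    have h1 : c.head hcne = (l.take (i+1)).head htne := List.head_append_left htne
    rw [h1, ha, List.head_eq_getElem_zero, List.head_eq_getElem_zero]
    exact List.getElem_take
  have hclast : c.getLast hcne = l[i+1] := by
    have h1 : c.getLast hcne = ((l.drop (i+1)).reverse).getLast (by simpa using hdne) :=
      List.getLast_append_of_ne_nil _ _
    rw [h1, List.getLast_reverse, List.head_eq_getElem_zero]
    simp
  have hlastadj : G.Adj (c.getLast hcne) a := by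
    rw [hclast]
    have : l.getD (i+1) v0 = l[i+1] := List.getD_eq_getElem _ _ hi1
    exact (this ▸ hia).symm
  have hcchain : c.IsChain G.Adj := by
    rw [hc, List.isChain_append]
    refine ⟨hlc.take _, ?_, ?_⟩
    · rw [List.isChain_reverse]
      exact (hlc.drop _).imp fun _ _ h => h.symm
    · intro x hx y hy
      rw [List.getLast?_eq_getLast htne] at hx
      rw [List.head?_eq_head (by simpa using hdne)] at hy
      simp only [Option.mem_some_iff] at hx hy
      subst hx; subst hy
      have hxval : (l.take (i+1)).getLast htne = l[i] := by
        rw [List.getLast_eq_getElem]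
        have : (l.take (i+1)).length = i + 1 := by
          rw [List.length_take]; omega
        simp only [this]
        exact List.getElem_take
      have hyval : (l.drop (i+1)).reverse.head (by simpa using hdne) = b := by
        have h2 := List.getLast_eq_head_reverse (l := l.drop (i+1)) hdne
        rw [← h2, List.getLast_eq_getElem, hb, List.getLast_eq_getElem]
        have : (l.drop (i+1)).length = l.length - (i+1) := by rw [List.length_drop]
        simp only [this, List.getElem_drop]
        congr 1
        omega
      rw [hxval, hyval]
      have : l.getD i v0 = l[i] := List.getD_eq_getElem _ _ (by omega)
      exact (this ▸ hib).symm
  by_cases hall : ∀ x : V, x ∈ l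
  · -- Build the Hamiltonian cycle
    have hcall : ∀ x : V, x ∈ c := fun x => hcperm.mem_iff.mpr (hall x)
    have hlenn : l.length = n := by
      have h1 : l.toFinset = Finset.univ := Finset.eq_univ_iff_forall.mpr (by simpa using hall)
      have h2 := List.toFinset_card_of_nodup hlnd
      rw [h1, Finset.card_univ] at h2
      exact h2.symm
    have hclen : c.length = n := hcperm.length_eq.trans hlenn
    have hcons : a :: c.tail = c := by rw [← hchead]; exact List.cons_head_tail hcne
    have hchain0 : (c ++ [a]).IsChain G.Adj := by
      rw [List.isChain_append]
      refine ⟨hcchain, List.isChain_singleton a, ?_⟩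
      intro x hx y hy
      rw [List.getLast?_eq_getLast hcne] at hx
      simp only [List.head?_cons, Option.mem_some_iff] at hx hy
      subst hx; subst hy
      exact hlastadj
    have hchain : List.Chain G.Adj a (c.tail ++ [a]) := by
      have : (a :: (c.tail ++ [a])).IsChain G.Adj := by
        rw [← List.cons_append, hcons]
        exact hchain0
      exact this
    have hctnd : (c.tail ++ [a]).Nodup := by
      have h1 : (a :: c.tail).Nodup := hcons ▸ hcnd
      rw [List.nodup_cons] at h1
      rw [List.nodup_append]
      exact ⟨h1.2, List.nodup_singleton a, by intro x hx y hy; simp at hy; subst hy; rintro rfl; exact h1.1 hx⟩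
    obtain ⟨v₁, rest, hvr⟩ : ∃ v₁ rest, c.tail = v₁ :: rest := by
      cases hh : c.tail with
      | nil => exfalso; have := congrArg List.length hcons; simp [hh, hclen] at this; omega
      | cons v₁ rest => exact ⟨v₁, rest, rfl⟩
    have hrest : rest ≠ [] := by
      rintro rfl
      have := congrArg List.length hcons
      simp [hvr, hclen] at this
      omega
    rw [hvr] at hchain hctnd
    refine ⟨a, DiracAux.toWalk G (v₁ :: rest) a a hchain, ?_⟩
    rw [SimpleGraph.Walk.isHamiltonianCycle_iff_isCycle_and_support_count_tail_eq_one]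
    constructor
    · show (SimpleGraph.Walk.cons _ (DiracAux.toWalk G rest v₁ a _)).IsCycle
      rw [SimpleGraph.Walk.cons_isCycle_iff]
      constructor
      · apply SimpleGraph.Walk.IsPath.mk'
        refine (congrArg List.Nodup (DiracAux.support_toWalk G rest v₁ a _)).mpr ?_
        have : v₁ :: (rest ++ [a]) = (v₁ :: rest) ++ [a] := by simp
        rw [this]
        exact hctnd
      · intro hmem
        have hanotin : a ∉ v₁ :: rest := by
          have h1 : (a :: c.tail).Nodup := hcons ▸ hcnd
          rw [List.nodup_cons, hvr] at h1
          exact h1.1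
        have := DiracAux.edge_end_toWalk G rest v₁ a _ hanotin v₁ hmem
        have hlast : (v₁ :: rest).getLast (List.cons_ne_nil _ _) ∈ rest := by
          rw [List.getLast_cons hrest]
          exact List.getLast_mem hrest
        rw [← this] at hlast
        have h1 : (a :: c.tail).Nodup := hcons ▸ hcnd
        rw [List.nodup_cons, hvr, List.nodup_cons] at h1
        exact h1.2.1 hlast
    · intro x
      rw [DiracAux.support_toWalk]
      simp only [List.tail_cons]
      have hperm : (v₁ :: rest) ++ [a] ~ c := by
        calc (v₁ :: rest) ++ [a] ~ [a] ++ (v₁ :: rest) := List.perm_append_comm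
        _ = a :: c.tail := by rw [← hvr]; rfl
        _ = c := hcons
      rw [show v₁ :: rest ++ [a] = (v₁ :: rest) ++ [a] from rfl, hperm.count_eq]
      exact List.count_eq_one_of_mem hcnd (hcall x)
  · -- Contradiction with maximality
    exfalso
    push_neg at hall
    obtain ⟨w, hw⟩ := hall
    by_cases hyp : ∃ y ∈ l, G.Adj w y
    · obtain ⟨y, hyl, hwy⟩ := hyp
      have hyc : y ∈ c := hcperm.mem_iff.mpr hyl
      obtain ⟨c₁, c₂, hsplit⟩ := List.append_of_mem hyc
      have hrotperm : c ~ y :: (c₂ ++ c₁) := by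
        rw [hsplit]
        exact List.perm_append_comm (l₁ := c₁) (l₂ := y :: c₂)
      have hwc : w ∉ c := fun h => hw (hcperm.mem_iff.mp h)
      have hrotchain : (y :: (c₂ ++ c₁)).IsChain G.Adj := by
        have : ((y :: c₂) ++ c₁).IsChain G.Adj := by
          rw [List.isChain_append]
          refine ⟨hcchain.suffix ⟨c₁, hsplit.symm⟩, hcchain.prefix ⟨y :: c₂, hsplit.symm⟩, ?_⟩
          intro x hx z hz
          have hc1 : c₁ ≠ [] := by rintro rfl; simp at hz
          rw [List.getLast?_eq_getLast (List.cons_ne_nil _ _), Option.mem_some_iff] at hx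
          rw [List.head?_eq_head hc1, Option.mem_some_iff] at hz
          have hxval : x = c.getLast hcne := by
            have h1 : c.getLast? = some x := by
              rw [hsplit, List.getLast?_append, List.getLast?_eq_getLast (List.cons_ne_nil _ _),
                Option.some_or]
              exact congrArg _ hx
            rw [List.getLast?_eq_getLast hcne] at h1
            exact (Option.some_injective _ h1).symm
          have hzval : z = a := by
            have h1 : c.head? = some z := by
              rw [hsplit, List.head?_append, List.head?_eq_head hc1, Option.some_or]
              exact congrArg _ hz
            rw [List.head?_eq_head hcne, hchead] at h1
            exact (Option.some_injective _ h1).symm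
          rw [hxval, hzval]
          exact hlastadj
        exact this
      have hnew : (w :: y :: (c₂ ++ c₁)).IsChain G.Adj := List.isChain_cons_cons.mpr ⟨hwy, hrotchain⟩
      have hnd : (w :: y :: (c₂ ++ c₁)).Nodup := by
        rw [List.nodup_cons]
        exact ⟨fun h => hwc (hrotperm.mem_iff.mpr h), (hrotperm.nodup_iff).mp hcnd⟩
      have := hmax _ (List.cons_ne_nil _ _) hnew hnd
      have hlen1 : (w :: y :: (c₂ ++ c₁)).length = c.length + 1 := by
        rw [hrotperm.length_eq]
        rfl
      rw [hlen1, hcperm.length_eq] at this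
      omega
    · push_neg at hyp
      have hal : a ∈ l := List.head_mem hl0
      have hwa : w ≠ a := fun h => hw (h ▸ hal)
      obtain ⟨x, hwx, hax⟩ := hcn w a hwa (hyp a hal)
      have hxl : x ∉ l := fun hx => hyp x hx hwx
      have hxc : x ∉ c := fun h => hxl (hcperm.mem_iff.mp h)
      have hwc : w ∉ c := fun h => hw (hcperm.mem_iff.mp h)
      have hchain : (w :: x :: c).IsChain G.Adj := by
        rw [List.isChain_cons_cons]
        refine ⟨hwx, ?_⟩
        rw [List.isChain_cons]
        refine ⟨?_, hcchain⟩
        intro z hz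
        rw [List.head?_eq_head hcne] at hz
        simp only [Option.mem_some_iff] at hz
        subst hz
        rw [hchead]
        exact hax.symm
      have hnd : (w :: x :: c).Nodup := by
        simp only [List.nodup_cons, List.mem_cons]
        exact ⟨by push_neg; exact ⟨G.ne_of_adj hwx, hwc⟩, hxc, hcnd⟩
      have := hmax _ (List.cons_ne_nil _ _) hchain hnd
      have : c.length + 2 ≤ l.length := by simp at this; omega
      rw [hcperm.length_eq] at this
      omega
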